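/- Assume (A1), (A2), (A3). For 0 ≤ μ < m set J_μ = {(i,ν) ∈ ℕ×ℕ^N : i+|ν| ≥ 2, |ν| ≥ 1, (∂ₓ^μ a_{i,ν})(0) ≠ 0}; for ν with |ν| ≥ 1 set K_ν = {(j,α) ∈ I_m : ν_{j,α} > 0} and m_{ν,μ} = max_{(j,α)∈K_ν} (j + max{α, μ+σ₀(α−μ)}). Then the index s₀ = 1 + max[0, max_{0≤μ<m} max_{(j,α)∈I_m} (j+μ+σ₀(α−μ)−m)/L_{μ,j,α}] equals 1 + max[0, max_{0≤μ<m} sup_{(i,ν)∈J_μ} (m_{ν,μ}−m)/(i+|ν|−1)]. -/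

import Mathlib

open PowerSeries Finset
open scoped Classical

noncomputable section

/-- The index set `I_m = {(j,α) ∈ ℕ×ℕ : j+α ≤ m, j < m}` as a finset. -/
def ImF (m : ℕ) : Finset (ℕ × ℕ) :=
  (Finset.range (m + 1) ×ˢ Finset.range (m + 1)).filter fun p => p.1 + p.2 ≤ m ∧ p.1 < m

/-- Coefficientwise derivative `∂ₓ` on `ℂ[[x]]`. -/
def dX (f : PowerSeries ℂ) : PowerSeries ℂ :=
  PowerSeries.mk fun l => ((l + 1 : ℕ) : ℂ) * PowerSeries.coeff (R := ℂ) (l + 1) f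

/-- `|ν| = Σ_{(j,α)} ν_{j,α}` for a multi-index `ν`. -/
def nsum (ν : (ℕ × ℕ) →₀ ℕ) : ℕ := ν.sum fun _ n => n

/-- `(t∂ₜ)^j ∂ₓ^α u` as an element of `ℂ[[x]][[t]]`, for `u` given by its family of
`t`-coefficients `u_k(x) ∈ ℂ[[x]]`. -/
def Dop (j α : ℕ) (u : ℕ → PowerSeries ℂ) : PowerSeries (PowerSeries ℂ) :=
  PowerSeries.mk fun k => ((k : ℂ) ^ j) • (dX^[α] (u k))

/-- `u = Σ_k u_k(x) t^k` is a formal power series solution, with `u(0,x) ≡ 0`, of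
`(t∂ₜ)^m u = F(t,x,{(t∂ₜ)^j ∂ₓ^α u}_{(j,α) ∈ I_m})`, where the holomorphic function `F`
is given through its Taylor expansion
`F(t,x,z) = a(x) t + Σ_{(j,α) ∈ I_m} x^α c_{j,α}(x) z_{j,α} + Σ_{i+|ν| ≥ 2} a_{i,ν}(x) t^i z^ν`
(this encodes the assumptions (A₂) and (A₃): `F(0,x,0) ≡ 0` and `b_{j,α}(x) = x^α c_{j,α}(x)`).
The equation is stated on the coefficient of each power `t^k`; since `u(0,x) ≡ 0` the
nonlinear part only involves the finitely many multi-indices appearing in the sum. -/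
def IsSol (m : ℕ) (a : PowerSeries ℂ) (c : ℕ × ℕ → PowerSeries ℂ)
    (A : ℕ → ((ℕ × ℕ) →₀ ℕ) → PowerSeries ℂ) (u : ℕ → PowerSeries ℂ) : Prop :=
  u 0 = 0 ∧ ∀ k : ℕ,
    ((k : ℂ) ^ m) • u k =
      (if k = 1 then a else 0)
        + ∑ p ∈ ImF m, (X ^ p.2 * c p) * (((k : ℂ) ^ p.1) • (dX^[p.2] (u k)))
        + ∑ i ∈ Finset.range (k + 1), ∑ n ∈ Finset.range (k + 1),
            ∑ ν ∈ Finset.finsuppAntidiag (ImF m) n,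
              A i ν * (PowerSeries.coeff (R := PowerSeries ℂ) (k - i))
                  (∏ p ∈ ImF m, Dop p.1 p.2 u ^ ν p)

/-- (A₁): Cauchy-type estimates on all the Taylor data of `F`, expressing that `F` is
holomorphic on a polydisk centered at the origin of `ℂ_t × ℂ_x × ℂ^N_z`. -/
def HoloData (a : PowerSeries ℂ) (c : ℕ × ℕ → PowerSeries ℂ)
    (A : ℕ → ((ℕ × ℕ) →₀ ℕ) → PowerSeries ℂ) : Prop :=
  ∃ M r : ℝ, 0 < r ∧
    (∀ l, ‖PowerSeries.coeff (R := ℂ) l a‖ ≤ M / r ^ l) ∧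
    (∀ p l, ‖PowerSeries.coeff (R := ℂ) l (c p)‖ ≤ M / r ^ l) ∧
    (∀ i ν l, ‖PowerSeries.coeff (R := ℂ) l (A i ν)‖ ≤ M / r ^ (i + nsum ν + l))

/-- `R₂(t,x,z) = Σ a_{i,ν}(x) t^i z^ν` consists only of terms of total degree `≥ 2`
in `(t,z)`, with `z` indexed by `I_m`. -/
def StructA (m : ℕ) (A : ℕ → ((ℕ × ℕ) →₀ ℕ) → PowerSeries ℂ) : Prop :=
  ∀ i ν, A i ν ≠ 0 → 2 ≤ i + nsum ν ∧ ν.support ⊆ ImF m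

/-- `L(λ,ρ) = λ^m − Σ_{(j,α) ∈ I_m} c_{j,α}(0) λ^j ρ(ρ−1)⋯(ρ−α+1)`, evaluated at `(k,l)`. -/
def Lfun (m : ℕ) (c : ℕ × ℕ → PowerSeries ℂ) (k l : ℕ) : ℂ :=
  (k : ℂ) ^ m - ∑ p ∈ ImF m, PowerSeries.constantCoeff (R := ℂ) (c p) * (k : ℂ) ^ p.1 *
      ∏ i ∈ Finset.range p.2, ((l : ℂ) - (i : ℂ))

/-- The non-resonance condition (N). -/
def Ncond (m : ℕ) (c : ℕ × ℕ → PowerSeries ℂ) : Prop :=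
  ∀ k l : ℕ, 1 ≤ k → Lfun m c k l ≠ 0

/-- `Λ₀ = {(m,0)} ∪ {(j,α) ∈ I_m : c_{j,α}(0) ≠ 0}` (with `c_{m,0} = −1`). -/
def Lam0 (m : ℕ) (c : ℕ × ℕ → PowerSeries ℂ) : Finset (ℕ × ℕ) :=
  insert (m, 0) ((ImF m).filter fun p => PowerSeries.constantCoeff (R := ℂ) (c p) ≠ 0)

/-- The coefficient `c_{j,α}(0)`, with the convention `c_{m,0}(x) = −1`. -/
def cval (m : ℕ) (c : ℕ × ℕ → PowerSeries ℂ) (q : ℕ × ℕ) : ℂ :=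
  if q = (m, 0) then -1 else PowerSeries.constantCoeff (R := ℂ) (c q)

/-- The Newton polygon `N₀` of the equation at `x = 0`: the convex hull of the union of
the quadrants `C(j,α) = {(x,y) : x ≤ j, y ≤ α}` for `(j,α) ∈ Λ₀`. -/
def NP (m : ℕ) (c : ℕ × ℕ → PowerSeries ℂ) : Set (ℝ × ℝ) :=
  convexHull ℝ (⋃ p ∈ Lam0 m c, {q : ℝ × ℝ | q.1 ≤ (p.1 : ℝ) ∧ q.2 ≤ (p.2 : ℝ)})

/-- `φ(λ,ρ) = Σ_{i=1}^p λ^{m_i} ρ^{n_i}`, the sum being over the vertices `(m_i,n_i)`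
of the Newton polygon `N₀` (its extreme points), evaluated at `(k,l)`. -/
def phi (m : ℕ) (c : ℕ × ℕ → PowerSeries ℂ) (k l : ℕ) : ℝ :=
  ∑ᶠ v ∈ Set.extremePoints ℝ (NP m c), (k : ℝ) ^ v.1 * (l : ℝ) ^ v.2

/-- The generalized Poincaré condition (GP): there is a chain of vertices
`(m,0) = (m₁,n₁), (m₂,n₂), …, (m_p,n_p)` (with `m₁ > m₂ > ⋯` and `n₁ < n₂ < ⋯`)
consisting exactly of the vertices (extreme points) of the Newton polygon `N₀`, such that
(i) for each side `Γ_i` joining consecutive vertices, every root of the characteristic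
polynomial `P_i(X) = Σ_{(j,α) ∈ Λ₀ ∩ Γ_i} c_{j,α}(0) X^{j−m_{i+1}}` lies in `ℂ ∖ [0,∞)`, and
(ii) if `m_p ≥ 1`, every root of `P_p(X) = Σ_{(j,α) ∈ Λ₀ ∩ Γ_p} c_{j,α}(0) X^j`
(the sum over the horizontal side) lies in `ℂ ∖ ℕ*`. -/
def GPcond (m : ℕ) (c : ℕ × ℕ → PowerSeries ℂ) : Prop :=
  ∃ (p : ℕ) (V : Fin (p + 1) → ℕ × ℕ),
    V 0 = (m, 0) ∧
    (StrictAnti fun i => (V i).1) ∧ (StrictMono fun i => (V i).2) ∧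
    ((fun q : ℕ × ℕ => ((q.1 : ℝ), (q.2 : ℝ))) '' Set.range V
        = Set.extremePoints ℝ (NP m c)) ∧
    (∀ i : Fin p, ∀ z : ℂ,
        (∑ q ∈ (Lam0 m c).filter (fun q => (((q.1 : ℝ), (q.2 : ℝ)) : ℝ × ℝ)
              ∈ segment ℝ (((V i.castSucc).1 : ℝ), ((V i.castSucc).2 : ℝ))
                           (((V i.succ).1 : ℝ), ((V i.succ).2 : ℝ))),
            cval m c q * z ^ (q.1 - (V i.succ).1)) = 0
        → ¬ ∃ r : ℝ, 0 ≤ r ∧ z = (r : ℂ)) ∧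
    (1 ≤ (V (Fin.last p)).1 →
      ∀ z : ℂ,
        (∑ q ∈ (Lam0 m c).filter
              (fun q => q.2 = (V (Fin.last p)).2 ∧ q.1 ≤ (V (Fin.last p)).1),
            cval m c q * z ^ q.1) = 0
        → ¬ ∃ n : ℕ, 1 ≤ n ∧ z = (n : ℂ))

/-- `Λ₁ = {(j,α) ∈ I_m : c_{j,α}(0) = 0, c_{j,α} ≢ 0}`. -/
def Lam1 (m : ℕ) (c : ℕ × ℕ → PowerSeries ℂ) : Finset (ℕ × ℕ) :=
  (ImF m).filter fun p => PowerSeries.constantCoeff (R := ℂ) (c p) = 0 ∧ c p ≠ 0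

/-- `p_{j,α}`: the order of the zero of `c_{j,α}(x)` at `x = 0`. -/
def pord (c : ℕ × ℕ → PowerSeries ℂ) (p : ℕ × ℕ) : ℕ :=
  sInf {n : ℕ | PowerSeries.coeff (R := ℂ) n (c p) ≠ 0}

/-- `d_{j,α} = min {y ∈ ℝ : (j, α−y) ∈ N₀}`. -/
def dNP (m : ℕ) (c : ℕ × ℕ → PowerSeries ℂ) (p : ℕ × ℕ) : ℝ :=
  sInf {y : ℝ | (((p.1 : ℝ), (p.2 : ℝ) - y) : ℝ × ℝ) ∈ NP m c}

/-- The irregularity `σ₀ = max[1, max_{(j,α) ∈ Λ₁} (p_{j,α}+d_{j,α})/p_{j,α}]`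
of the equation at `x = 0`. -/
def sigma0 (m : ℕ) (c : ℕ × ℕ → PowerSeries ℂ) : ℝ :=
  max 1 (sSup {r : ℝ | ∃ p ∈ Lam1 m c, r = ((pord c p : ℝ) + dNP m c p) / (pord c p : ℝ)})

/-- `L_{μ,j,α} = val((∂_{z_{j,α}} ∂ₓ^μ R₂)(t,0,z))`: the smallest total degree
`i + |ν| − 1` of a monomial `t^i z^{ν − e_{j,α}}` actually appearing (i.e. with
`ν_{j,α} > 0` and `(∂ₓ^μ a_{i,ν})(0) ≠ 0`).  (When the derivative vanishes identically
the set below is empty, `sInf ∅ = 0`, and the corresponding term of `s₀` is the junk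
value `r/0 = 0`, matching the convention `r/∞ = 0` for `val(0) = ∞`.) -/
def Lval (A : ℕ → ((ℕ × ℕ) →₀ ℕ) → PowerSeries ℂ) (μ : ℕ) (p : ℕ × ℕ) : ℕ :=
  sInf {n : ℕ | ∃ i ν, ν p ≠ 0 ∧ PowerSeries.coeff (R := ℂ) μ (A i ν) ≠ 0 ∧ n = i + nsum ν - 1}

/-- The Gevrey index
`s₀ = 1 + max[0, max_{0 ≤ μ < m} max_{(j,α) ∈ I_m} (j+μ+σ₀(α−μ)−m)/L_{μ,j,α}]`. -/
def s0 (m : ℕ) (c : ℕ × ℕ → PowerSeries ℂ)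
    (A : ℕ → ((ℕ × ℕ) →₀ ℕ) → PowerSeries ℂ) : ℝ :=
  1 + max 0 (sSup {r : ℝ | ∃ μ < m, ∃ p ∈ ImF m,
      r = ((p.1 : ℝ) + (μ : ℝ) + sigma0 m c * ((p.2 : ℝ) - (μ : ℝ)) - (m : ℝ)) /
            (Lval A μ p : ℝ)})

/-- `u ∈ G{t,x}_{(s,σ)}`: the series `Σ (u_{k,l}/(k!^{s−1} l!^{σ−1})) t^k x^l`
converges in a neighborhood of the origin (absolute convergence on a small polydisk). -/
def Gevrey (s σ : ℝ) (u : ℕ → PowerSeries ℂ) : Prop :=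
  ∃ r : ℝ, 0 < r ∧ Summable fun q : ℕ × ℕ =>
    ‖PowerSeries.coeff (R := ℂ) q.2 (u q.1)‖ /
        ((q.1.factorial : ℝ) ^ (s - 1) * (q.2.factorial : ℝ) ^ (σ - 1)) * r ^ (q.1 + q.2)

/-- `m_{ν,μ} = max_{(j,α) ∈ K_ν} (j + max{α, μ + σ₀(α−μ)})`, where
`K_ν = {(j,α) : ν_{j,α} > 0}` is the support of the multi-index `ν`. -/
def mvm (m : ℕ) (c : ℕ × ℕ → PowerSeries ℂ) (ν : (ℕ × ℕ) →₀ ℕ) (μ : ℕ) : ℝ :=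
  sSup {r : ℝ | ∃ p ∈ ν.support,
    r = (p.1 : ℝ) + max ((p.2 : ℝ)) ((μ : ℝ) + sigma0 m c * ((p.2 : ℝ) - (μ : ℝ)))}

/-- The reformulated index
`1 + max[0, max_{0≤μ<m} sup_{(i,ν) ∈ J_μ} (m_{ν,μ} − m)/(i+|ν|−1)]`, where
`J_μ = {(i,ν) : i+|ν| ≥ 2, |ν| ≥ 1, (∂ₓ^μ a_{i,ν})(0) ≠ 0}`. -/
def s0' (m : ℕ) (c : ℕ × ℕ → PowerSeries ℂ)
    (A : ℕ → ((ℕ × ℕ) →₀ ℕ) → PowerSeries ℂ) : ℝ :=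
  1 + max 0 (sSup {r : ℝ | ∃ μ < m, ∃ i ν, 2 ≤ i + nsum ν ∧ 1 ≤ nsum ν ∧
      PowerSeries.coeff (R := ℂ) μ (A i ν) ≠ 0 ∧
      r = (mvm m c ν μ - (m : ℝ)) / ((i + nsum ν - 1 : ℕ) : ℝ)})

lemma nsum_ge (ν : (ℕ × ℕ) →₀ ℕ) (p : ℕ × ℕ) : ν p ≤ nsum ν := by
  classical
  by_cases h : p ∈ ν.support
  · exact Finset.single_le_sum (f := fun q => ν q) (fun _ _ => Nat.zero_le _) h
  · simp [Finsupp.notMem_support_iff.mp h]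

lemma div_nat_le_max {x B : ℝ} (hx : x ≤ B) (L : ℕ) : x / (L : ℝ) ≤ max 0 B := by
  rcases Nat.eq_zero_or_pos L with h | h
  · simp [h]
  · rcases le_or_gt x 0 with hx0 | hx0
    · exact le_trans (div_nonpos_of_nonpos_of_nonneg hx0 (by positivity)) (le_max_left _ _)
    · have h1 : (1:ℝ) ≤ (L:ℝ) := by exact_mod_cast h
      exact le_trans (le_trans (div_le_self hx0.le h1) hx) (le_max_right _ _)

/-- **Lemma 4.1** (Lastra–Tahara). Under (A₁), (A₂), (A₃), the Gevrey index `s₀` of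
(2.5) can be expressed in the form (3.17):
`s₀ = 1 + max[0, max_{0≤μ<m} sup_{(i,ν) ∈ J_μ} (m_{ν,μ} − m)/(i+|ν|−1)]`. -/
theorem s0_reformulation (m : ℕ) (hm : 1 ≤ m)
    (a : PowerSeries ℂ) (c : ℕ × ℕ → PowerSeries ℂ)
    (A : ℕ → ((ℕ × ℕ) →₀ ℕ) → PowerSeries ℂ)
    (hA1 : HoloData a c A) (hA2 : StructA m A) :
    s0 m c A = s0' m c A := by
  classical
  set σ := sigma0 m c with hσdef
  set S1 : Set ℝ := {r : ℝ | ∃ μ < m, ∃ p ∈ ImF m,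
      r = ((p.1 : ℝ) + (μ : ℝ) + σ * ((p.2 : ℝ) - (μ : ℝ)) - (m : ℝ)) /
            (Lval A μ p : ℝ)} with hS1def
  set S2 : Set ℝ := {r : ℝ | ∃ μ < m, ∃ i ν, 2 ≤ i + nsum ν ∧ 1 ≤ nsum ν ∧
      PowerSeries.coeff (R := ℂ) μ (A i ν) ≠ 0 ∧
      r = (mvm m c ν μ - (m : ℝ)) / ((i + nsum ν - 1 : ℕ) : ℝ)} with hS2def
  have hImF : ∀ p ∈ ImF m, p.1 ≤ m ∧ p.2 ≤ m := by
    intro p hp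
    simp only [ImF, Finset.mem_filter, Finset.mem_product, Finset.mem_range] at hp
    omega
  set B : ℝ := 2 * m + 2 * m * |σ| with hBdef
  have hB0 : 0 ≤ B := by positivity
  -- numerator bound
  have hnum : ∀ μ : ℕ, μ < m → ∀ p ∈ ImF m,
      (p.1 : ℝ) + (μ : ℝ) + σ * ((p.2 : ℝ) - (μ : ℝ)) - (m : ℝ) ≤ B := by
    intro μ hμ p hp
    obtain ⟨h1, h2⟩ := hImF p hp
    have h1' : (p.1 : ℝ) ≤ m := by exact_mod_cast h1
    have h2' : (p.2 : ℝ) ≤ m := by exact_mod_cast h2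
    have hμ' : (μ : ℝ) ≤ m := by exact_mod_cast hμ.le
    have hd : |(p.2 : ℝ) - (μ : ℝ)| ≤ m := by
      rw [abs_le]
      constructor <;> [linarith [Nat.cast_nonneg (α := ℝ) p.2]; linarith [Nat.cast_nonneg (α := ℝ) μ]]
    have hsd : σ * ((p.2 : ℝ) - (μ : ℝ)) ≤ |σ| * m :=
      le_trans (le_abs_self _) (by rw [abs_mul]; exact mul_le_mul_of_nonneg_left hd (abs_nonneg σ))
    have : (0:ℝ) ≤ m * |σ| := by positivity
    nlinarith
  -- bound on summands of mvm
  have hfp : ∀ μ : ℕ, μ < m → ∀ p ∈ ImF m,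
      (p.1 : ℝ) + max ((p.2 : ℝ)) ((μ : ℝ) + σ * ((p.2 : ℝ) - (μ : ℝ))) ≤ B := by
    intro μ hμ p hp
    obtain ⟨h1, h2⟩ := hImF p hp
    have h1' : (p.1 : ℝ) ≤ m := by exact_mod_cast h1
    have h2' : (p.2 : ℝ) ≤ m := by exact_mod_cast h2
    have hμ' : (μ : ℝ) ≤ m := by exact_mod_cast hμ.le
    have hd : |(p.2 : ℝ) - (μ : ℝ)| ≤ m := by
      rw [abs_le]
      constructor <;> [linarith [Nat.cast_nonneg (α := ℝ) p.2]; linarith [Nat.cast_nonneg (α := ℝ) μ]]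
    have hsd : σ * ((p.2 : ℝ) - (μ : ℝ)) ≤ |σ| * m :=
      le_trans (le_abs_self _) (by rw [abs_mul]; exact mul_le_mul_of_nonneg_left hd (abs_nonneg σ))
    have hmσ : (0:ℝ) ≤ m * |σ| := by positivity
    have hmax : max ((p.2 : ℝ)) ((μ : ℝ) + σ * ((p.2 : ℝ) - (μ : ℝ))) ≤ (m : ℝ) + |σ| * m := by
      apply max_le <;> nlinarith
    nlinarith
  -- the mvm set
  have hmvm_le : ∀ μ : ℕ, μ < m → ∀ ν : (ℕ × ℕ) →₀ ℕ, ↑ν.support ⊆ (ImF m : Set (ℕ × ℕ)) →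
      mvm m c ν μ ≤ B := by
    intro μ hμ ν hsupp
    apply Real.sSup_le _ hB0
    rintro x ⟨p, hp, rfl⟩
    exact hfp μ hμ p (hsupp hp)
  -- membership facts about Lval
  have hLval_ge1 : ∀ μ (p : ℕ × ℕ), Lval A μ p ≠ 0 →
      ∃ i ν, ν p ≠ 0 ∧ PowerSeries.coeff (R := ℂ) μ (A i ν) ≠ 0 ∧ Lval A μ p = i + nsum ν - 1 := by
    intro μ p hL
    have hne : {n : ℕ | ∃ i ν, ν p ≠ 0 ∧ PowerSeries.coeff (R := ℂ) μ (A i ν) ≠ 0 ∧ n = i + nsum ν - 1}.Nonempty := by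
      by_contra h
      rw [Set.not_nonempty_iff_eq_empty] at h
      exact hL (by rw [Lval, h, Nat.sInf_empty])
    exact Nat.sInf_mem hne
  -- S2 is bounded above
  have hS2ub : ∀ r ∈ S2, r ≤ max 0 B := by
    rintro r ⟨μ, hμ, i, ν, h2, hν1, hAc, rfl⟩
    have hA : A i ν ≠ 0 := fun h => hAc (by simp [h])
    have hsupp := (hA2 i ν hA).2
    have hmvm : mvm m c ν μ - (m:ℝ) ≤ B := by
      have := hmvm_le μ hμ ν (by exact_mod_cast Finset.coe_subset.mpr hsupp)
      have hm0 : (0:ℝ) ≤ m := Nat.cast_nonneg m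
      linarith
    exact div_nat_le_max hmvm _
  have hS2bdd : BddAbove S2 := ⟨max 0 B, fun r hr => hS2ub r hr⟩
  -- S1 is bounded above
  have hS1ub : ∀ r ∈ S1, r ≤ max 0 B := by
    rintro r ⟨μ, hμ, p, hp, rfl⟩
    exact div_nat_le_max (by linarith [hnum μ hμ p hp]) _
  have hS1bdd : BddAbove S1 := ⟨max 0 B, fun r hr => hS1ub r hr⟩
  -- direction 1 : every element of S1 is ≤ max 0 (sSup S2)
  have h12 : ∀ r ∈ S1, r ≤ max 0 (sSup S2) := by
    rintro r ⟨μ, hμ, p, hp, rfl⟩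
    rcases Nat.eq_zero_or_pos (Lval A μ p) with hL | hL
    · simp [hL]
    · obtain ⟨i, ν, hνp, hAc, hLeq⟩ := hLval_ge1 μ p hL.ne'
      have hA : A i ν ≠ 0 := fun h => hAc (by simp [h])
      have h2 := (hA2 i ν hA).1
      have hν1 : 1 ≤ nsum ν := le_trans (Nat.one_le_iff_ne_zero.mpr hνp) (nsum_ge ν p)
      have hps : p ∈ ν.support := Finsupp.mem_support_iff.mpr hνp
      set f : ℕ × ℕ → ℝ := fun q =>
        (q.1 : ℝ) + max ((q.2 : ℝ)) ((μ : ℝ) + σ * ((q.2 : ℝ) - (μ : ℝ))) with hfdef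
      have hTim : {x : ℝ | ∃ q ∈ ν.support, x = f q} = f '' ↑ν.support := by
        ext x; simp [eq_comm]
      have hTbdd : BddAbove {x : ℝ | ∃ q ∈ ν.support, x = f q} := by
        rw [hTim]; exact (ν.support.finite_toSet.image f).bddAbove
      have hle_mvm : f p ≤ mvm m c ν μ := le_csSup hTbdd ⟨p, hps, rfl⟩
      have hnum_le : (p.1 : ℝ) + (μ : ℝ) + σ * ((p.2 : ℝ) - (μ : ℝ)) - (m : ℝ)
          ≤ mvm m c ν μ - (m : ℝ) := by
        have : (μ : ℝ) + σ * ((p.2 : ℝ) - (μ : ℝ)) ≤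
            max ((p.2 : ℝ)) ((μ : ℝ) + σ * ((p.2 : ℝ) - (μ : ℝ))) := le_max_right _ _
        simp only [hfdef] at hle_mvm
        linarith
      have hr2 : (mvm m c ν μ - (m : ℝ)) / ((i + nsum ν - 1 : ℕ) : ℝ) ∈ S2 :=
        ⟨μ, hμ, i, ν, h2, hν1, hAc, rfl⟩
      have hDpos : (0:ℝ) < ((i + nsum ν - 1 : ℕ) : ℝ) := by
        have : 1 ≤ i + nsum ν - 1 := by omega
        exact_mod_cast Nat.lt_of_lt_of_le Nat.zero_lt_one (by exact_mod_cast this)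
      calc ((p.1 : ℝ) + (μ : ℝ) + σ * ((p.2 : ℝ) - (μ : ℝ)) - (m : ℝ)) / (Lval A μ p : ℝ)
          ≤ (mvm m c ν μ - (m : ℝ)) / ((i + nsum ν - 1 : ℕ) : ℝ) := by
            rw [hLeq]
            gcongr
        _ ≤ sSup S2 := le_csSup hS2bdd hr2
        _ ≤ max 0 (sSup S2) := le_max_right _ _
  -- direction 2 : every element of S2 is ≤ max 0 (sSup S1)
  have h21 : ∀ r ∈ S2, r ≤ max 0 (sSup S1) := by
    rintro r ⟨μ, hμ, i, ν, h2, hν1, hAc, rfl⟩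
    have hA : A i ν ≠ 0 := fun h => hAc (by simp [h])
    have hsupp := (hA2 i ν hA).2
    have hν0 : ν ≠ 0 := by
      intro h; rw [h] at hν1; simp [nsum] at hν1
    set f : ℕ × ℕ → ℝ := fun q =>
      (q.1 : ℝ) + max ((q.2 : ℝ)) ((μ : ℝ) + σ * ((q.2 : ℝ) - (μ : ℝ))) with hfdef
    have hTim : {x : ℝ | ∃ q ∈ ν.support, x = f q} = f '' ↑ν.support := by
      ext x; simp [eq_comm]
    have hTfin : {x : ℝ | ∃ q ∈ ν.support, x = f q}.Finite := by
      rw [hTim]; exact ν.support.finite_toSet.image f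
    have hTne : {x : ℝ | ∃ q ∈ ν.support, x = f q}.Nonempty := by
      obtain ⟨p, hp⟩ := Finsupp.support_nonempty_iff.mpr hν0
      exact ⟨f p, p, hp, rfl⟩
    have hmem : mvm m c ν μ ∈ {x : ℝ | ∃ q ∈ ν.support, x = f q} := by
      have := hTne.csSup_mem hTfin
      exact this
    obtain ⟨p, hps, hfpval⟩ := hmem
    have hpI : p ∈ ImF m := hsupp hps
    have hνp : ν p ≠ 0 := Finsupp.mem_support_iff.mp hps
    have hDpos : (0:ℝ) < ((i + nsum ν - 1 : ℕ) : ℝ) := by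
      have h1 : 1 ≤ i + nsum ν - 1 := by omega
      exact_mod_cast Nat.lt_of_lt_of_le Nat.zero_lt_one (by exact_mod_cast h1)
    rcases le_total ((μ : ℝ) + σ * ((p.2 : ℝ) - (μ : ℝ))) ((p.2 : ℝ)) with hc | hc
    · -- max = p.2 : numerator ≤ 0
      have hmax : max ((p.2 : ℝ)) ((μ : ℝ) + σ * ((p.2 : ℝ) - (μ : ℝ))) = (p.2 : ℝ) :=
        max_eq_left hc
      have hsum : (p.1 : ℝ) + (p.2 : ℝ) ≤ (m : ℝ) := by
        have : p.1 + p.2 ≤ m := by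
          simp only [ImF, Finset.mem_filter] at hpI; exact hpI.2.1
        exact_mod_cast this
      have hnump : mvm m c ν μ - (m : ℝ) ≤ 0 := by
        rw [hfpval]; simp only [hfdef, hmax]; linarith
      exact le_trans (div_nonpos_of_nonpos_of_nonneg hnump hDpos.le) (le_max_left _ _)
    · -- max = μ + σ(p.2 - μ)
      have hmax : max ((p.2 : ℝ)) ((μ : ℝ) + σ * ((p.2 : ℝ) - (μ : ℝ)))
          = (μ : ℝ) + σ * ((p.2 : ℝ) - (μ : ℝ)) := max_eq_right hc
      have hval : mvm m c ν μ = (p.1 : ℝ) + ((μ : ℝ) + σ * ((p.2 : ℝ) - (μ : ℝ))) := by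
        rw [hfpval]; simp only [hfdef, hmax]
      set L := Lval A μ p with hLdef
      have hLle : L ≤ i + nsum ν - 1 := Nat.sInf_le ⟨i, ν, hνp, hAc, rfl⟩
      have hLne : L ≠ 0 := by
        have hmem' : L ∈ {n : ℕ | ∃ i' ν', ν' p ≠ 0 ∧ PowerSeries.coeff (R := ℂ) μ (A i' ν') ≠ 0 ∧
            n = i' + nsum ν' - 1} :=
          Nat.sInf_mem ⟨i + nsum ν - 1, i, ν, hνp, hAc, rfl⟩
        obtain ⟨i', ν', hν'p, hAc', hLeq'⟩ := hmem'
        have hA' : A i' ν' ≠ 0 := fun h => hAc' (by simp [h])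
        have h2' := (hA2 i' ν' hA').1
        omega
      have hLpos : (0:ℝ) < (L : ℝ) := by
        exact_mod_cast Nat.pos_of_ne_zero hLne
      have hr1 : ((p.1 : ℝ) + (μ : ℝ) + σ * ((p.2 : ℝ) - (μ : ℝ)) - (m : ℝ)) / (L : ℝ) ∈ S1 :=
        ⟨μ, hμ, p, hpI, rfl⟩
      set num : ℝ := (p.1 : ℝ) + (μ : ℝ) + σ * ((p.2 : ℝ) - (μ : ℝ)) - (m : ℝ) with hnumdef
      have hnum_eq : mvm m c ν μ - (m : ℝ) = num := by rw [hval, hnumdef]; ring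
      rcases le_or_gt num 0 with hn0 | hn0
      · rw [hnum_eq]
        exact le_trans (div_nonpos_of_nonpos_of_nonneg hn0 hDpos.le) (le_max_left _ _)
      · have step1 : (mvm m c ν μ - (m : ℝ)) / ((i + nsum ν - 1 : ℕ) : ℝ) ≤ num / (L : ℝ) := by
          rw [hnum_eq]
          apply div_le_div_of_nonneg_left hn0.le hLpos
          exact_mod_cast hLle
        exact le_trans step1 (le_trans (le_csSup hS1bdd hr1) (le_max_right _ _))
  -- conclusion
  have key : max 0 (sSup S1) = max 0 (sSup S2) := by
    apply le_antisymm
    · apply max_le (le_max_left _ _)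
      exact Real.sSup_le h12 (le_max_left _ _)
    · apply max_le (le_max_left _ _)
      exact Real.sSup_le h21 (le_max_left _ _)
  rw [s0, s0']
  rw [← hS1def, ← hS2def, key]
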